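/- Let Γ be a group, Γ₀ a finite-index normal subgroup, and γ ∈ Γ a virtually unipotent element of Γ. Let γ₀ be a generator of the cyclic group ⟨γ⟩ ∩ Γ₀. Then γ₀ is a virtually unipotent element of Γ₀. -/

import Mathlib

/-- An element `γ` of a group `Γ` is virtually unipotent if every finite-dimensional
linear representation of `Γ` (over any field) sends `γ` to a matrix all of whose
eigenvalues, over the algebraic closure, are roots of unity. -/
def IsVirtuallyUnipotent {Γ : Type*} [Group Γ] (γ : Γ) : Prop :=
  ∀ (F : Type) (_ : Field F) (n : ℕ) (ρ : Γ →* GL (Fin n) F)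
    (μ : AlgebraicClosure F),
    (((ρ γ : Matrix (Fin n) (Fin n) F)).map
      (algebraMap F (AlgebraicClosure F))).charpoly.IsRoot μ →
    ∃ m : ℕ, 0 < m ∧ μ ^ m = 1

open Matrix Polynomial

section SpectrumAux

variable {K : Type*} [Field K] {ι : Type*} [Fintype ι] [DecidableEq ι]

lemma mem_spectrum_iff_isRoot_charpoly (A : Matrix ι ι K) (μ : K) :
    μ ∈ spectrum K A ↔ A.charpoly.IsRoot μ := by
  have h2 : (charmatrix A).map (Polynomial.evalRingHom μ)
      = algebraMap K (Matrix ι ι K) μ - A := by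
    ext i j
    by_cases h : i = j <;>
      simp [charmatrix_apply, Matrix.algebraMap_matrix_apply, Matrix.diagonal_apply, h]
  have hdet : A.charpoly.eval μ = (algebraMap K (Matrix ι ι K) μ - A).det := by
    have h1 := RingHom.map_det (Polynomial.evalRingHom μ) (charmatrix A)
    rw [Matrix.charpoly, ← h2, ← RingHom.mapMatrix_apply]
    exact h1
  rw [spectrum.mem_iff, Matrix.isUnit_iff_isUnit_det, isUnit_iff_ne_zero, not_ne_iff,
    Polynomial.IsRoot, hdet]

end SpectrumAux

section BlockAux

lemma charpoly_blockDiagonal {o : Type*} [Fintype o] [DecidableEq o]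
    {m : Type*} [Fintype m] [DecidableEq m] {R : Type*} [CommRing R]
    (M : o → Matrix m m R) :
    (Matrix.blockDiagonal M).charpoly = ∏ q : o, (M q).charpoly := by
  unfold Matrix.charpoly
  rw [← Matrix.det_blockDiagonal]
  congr 1
  ext ⟨i, q⟩ ⟨j, q'⟩
  by_cases hq : q = q'
  · subst hq
    by_cases hij : i = j <;>
      simp [charmatrix_apply, Matrix.blockDiagonal_apply, Matrix.diagonal_apply,
        Prod.ext_iff, hij]
  · simp [charmatrix_apply, Matrix.blockDiagonal_apply, Matrix.diagonal_apply,
      Prod.ext_iff, hq]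

end BlockAux

section Induced

variable {Γ : Type*} [Group Γ] (Γ₀ : Subgroup Γ) [Γ₀.Normal]
variable [Fintype (Γ ⧸ Γ₀)] [DecidableEq (Γ ⧸ Γ₀)]
variable (F : Type) [Field F] (n : ℕ) (ρ : Γ₀ →* GL (Fin n) F)

/-- A transversal of `Γ₀` in `Γ`, normalized so that the coset of `1` goes to `1`. -/
noncomputable def sec (q : Γ ⧸ Γ₀) : Γ :=
  if q = 1 then 1 else Quotient.out q

lemma sec_spec (q : Γ ⧸ Γ₀) : (QuotientGroup.mk' Γ₀) (sec Γ₀ q) = q := by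
  unfold sec
  split_ifs with h
  · simp [h]
  · exact QuotientGroup.out_eq' q

lemma sec_one : sec Γ₀ (1 : Γ ⧸ Γ₀) = 1 := if_pos rfl

lemma cocyc_mem (g : Γ) (q : Γ ⧸ Γ₀) :
    (sec Γ₀ q)⁻¹ * g * sec Γ₀ (((QuotientGroup.mk' Γ₀) g)⁻¹ * q) ∈ Γ₀ := by
  have h : (QuotientGroup.mk' Γ₀) ((sec Γ₀ q)⁻¹ * g *
      sec Γ₀ (((QuotientGroup.mk' Γ₀) g)⁻¹ * q)) = 1 := by
    rw [_root_.map_mul, _root_.map_mul, _root_.map_inv, sec_spec, sec_spec]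
    group
  exact (QuotientGroup.eq_one_iff _).mp h

/-- The cocycle associated to the transversal. -/
noncomputable def cocyc (g : Γ) (q : Γ ⧸ Γ₀) : Γ₀ :=
  ⟨(sec Γ₀ q)⁻¹ * g * sec Γ₀ (((QuotientGroup.mk' Γ₀) g)⁻¹ * q), cocyc_mem Γ₀ g q⟩

lemma cocyc_one (q : Γ ⧸ Γ₀) : cocyc Γ₀ 1 q = 1 := by
  apply Subtype.ext
  show (sec Γ₀ q)⁻¹ * 1 * sec Γ₀ (((QuotientGroup.mk' Γ₀) 1)⁻¹ * q) = 1
  rw [_root_.map_one, inv_one, one_mul, mul_one, inv_mul_cancel]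

lemma cocyc_mul (g h : Γ) (q : Γ ⧸ Γ₀) :
    cocyc Γ₀ g q * cocyc Γ₀ h (((QuotientGroup.mk' Γ₀) g)⁻¹ * q) = cocyc Γ₀ (g * h) q := by
  apply Subtype.ext
  have harg : ((QuotientGroup.mk' Γ₀) h)⁻¹ * (((QuotientGroup.mk' Γ₀) g)⁻¹ * q)
      = ((QuotientGroup.mk' Γ₀) (g * h))⁻¹ * q := by
    rw [_root_.map_mul, _root_.mul_inv_rev, mul_assoc]
  show ((sec Γ₀ q)⁻¹ * g * sec Γ₀ (((QuotientGroup.mk' Γ₀) g)⁻¹ * q)) *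
      ((sec Γ₀ (((QuotientGroup.mk' Γ₀) g)⁻¹ * q))⁻¹ * h *
        sec Γ₀ (((QuotientGroup.mk' Γ₀) h)⁻¹ * (((QuotientGroup.mk' Γ₀) g)⁻¹ * q)))
      = (sec Γ₀ q)⁻¹ * (g * h) * sec Γ₀ (((QuotientGroup.mk' Γ₀) (g * h))⁻¹ * q)
  rw [harg]
  group

lemma cocyc_self {g : Γ} (hg : g ∈ Γ₀) : cocyc Γ₀ g 1 = ⟨g, hg⟩ := by
  apply Subtype.ext
  have hg1 : (QuotientGroup.mk' Γ₀) g = 1 := (QuotientGroup.eq_one_iff g).mpr hg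
  show (sec Γ₀ 1)⁻¹ * g * sec Γ₀ (((QuotientGroup.mk' Γ₀) g)⁻¹ * 1) = g
  rw [hg1]
  simp [sec_one]

/-- The induced representation, as a family of matrices. -/
noncomputable def indMat (g : Γ) :
    Matrix ((Γ ⧸ Γ₀) × Fin n) ((Γ ⧸ Γ₀) × Fin n) F :=
  Matrix.of fun p p' =>
    if p'.1 = ((QuotientGroup.mk' Γ₀) g)⁻¹ * p.1
    then ((ρ (cocyc Γ₀ g p.1) : Matrix (Fin n) (Fin n) F)) p.2 p'.2
    else 0

lemma indMat_one : indMat Γ₀ F n ρ 1 = 1 := by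
  ext ⟨q, i⟩ ⟨q', j⟩
  show (if q' = ((QuotientGroup.mk' Γ₀) 1)⁻¹ * q
    then ((ρ (cocyc Γ₀ 1 q) : Matrix (Fin n) (Fin n) F)) i j else 0) = _
  rw [_root_.map_one, inv_one, one_mul, cocyc_one, _root_.map_one, Matrix.one_apply]
  simp only [Units.val_one, Matrix.one_apply, Prod.mk.injEq]
  split_ifs with h1 h2 h3 h3 <;> tauto

lemma indMat_mul (g h : Γ) :
    indMat Γ₀ F n ρ g * indMat Γ₀ F n ρ h = indMat Γ₀ F n ρ (g * h) := by
  ext ⟨q, i⟩ ⟨q'', k⟩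
  rw [Matrix.mul_apply, Fintype.sum_prod_type]
  rw [Finset.sum_eq_single (((QuotientGroup.mk' Γ₀) g)⁻¹ * q)]
  · have harg : ((QuotientGroup.mk' Γ₀) h)⁻¹ * (((QuotientGroup.mk' Γ₀) g)⁻¹ * q)
        = ((QuotientGroup.mk' Γ₀) (g * h))⁻¹ * q := by
      rw [_root_.map_mul, _root_.mul_inv_rev, mul_assoc]
    show (∑ j : Fin n,
        (if ((QuotientGroup.mk' Γ₀) g)⁻¹ * q = ((QuotientGroup.mk' Γ₀) g)⁻¹ * q
          then ((ρ (cocyc Γ₀ g q) : Matrix (Fin n) (Fin n) F)) i j else 0) *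
        (if q'' = ((QuotientGroup.mk' Γ₀) h)⁻¹ * (((QuotientGroup.mk' Γ₀) g)⁻¹ * q)
          then ((ρ (cocyc Γ₀ h (((QuotientGroup.mk' Γ₀) g)⁻¹ * q))
            : Matrix (Fin n) (Fin n) F)) j k else 0)) = _
    rw [harg]
    simp only [if_pos rfl, ite_true]
    show _ = (if q'' = ((QuotientGroup.mk' Γ₀) (g * h))⁻¹ * q
      then ((ρ (cocyc Γ₀ (g * h) q) : Matrix (Fin n) (Fin n) F)) i k else 0)
    by_cases hc : q'' = ((QuotientGroup.mk' Γ₀) (g * h))⁻¹ * q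
    · rw [if_pos hc]
      simp only [if_pos hc]
      rw [← cocyc_mul Γ₀ g h q, _root_.map_mul, Units.val_mul, Matrix.mul_apply]
    · rw [if_neg hc]
      simp only [if_neg hc, mul_zero, Finset.sum_const_zero]
  · intro q' _ hne
    show (∑ j : Fin n,
        (if q' = ((QuotientGroup.mk' Γ₀) g)⁻¹ * q
          then ((ρ (cocyc Γ₀ g q) : Matrix (Fin n) (Fin n) F)) i j else 0) * _) = 0
    simp only [if_neg hne, zero_mul, Finset.sum_const_zero]
  · intro habs
    exact absurd (Finset.mem_univ _) habs

/-- The induced representation as a monoid homomorphism to matrices. -/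
noncomputable def indHom : Γ →* Matrix ((Γ ⧸ Γ₀) × Fin n) ((Γ ⧸ Γ₀) × Fin n) F where
  toFun g := indMat Γ₀ F n ρ g
  map_one' := indMat_one Γ₀ F n ρ
  map_mul' g h := (indMat_mul Γ₀ F n ρ g h).symm

/-- The induced representation. -/
noncomputable def indRep : Γ →* GL ((Γ ⧸ Γ₀) × Fin n) F :=
  (indHom Γ₀ F n ρ).toHomUnits

lemma indRep_val (g : Γ) :
    ((indRep Γ₀ F n ρ g : Matrix ((Γ ⧸ Γ₀) × Fin n) ((Γ ⧸ Γ₀) × Fin n) F))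
      = indMat Γ₀ F n ρ g := rfl

lemma indMat_mem_eq_blockDiagonal {g : Γ} (hg : g ∈ Γ₀) :
    indMat Γ₀ F n ρ g =
      Matrix.reindex (Equiv.prodComm (Fin n) (Γ ⧸ Γ₀)) (Equiv.prodComm (Fin n) (Γ ⧸ Γ₀))
        (Matrix.blockDiagonal fun q => ((ρ (cocyc Γ₀ g q) : Matrix (Fin n) (Fin n) F))) := by
  have hg1 : (QuotientGroup.mk' Γ₀) g = 1 := (QuotientGroup.eq_one_iff g).mpr hg
  ext ⟨q, i⟩ ⟨q', j⟩
  show (if q' = ((QuotientGroup.mk' Γ₀) g)⁻¹ * q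
      then ((ρ (cocyc Γ₀ g q) : Matrix (Fin n) (Fin n) F)) i j else 0) = _
  rw [hg1, inv_one, one_mul]
  simp only [Matrix.reindex_apply, Matrix.submatrix_apply, Equiv.prodComm_symm,
    Equiv.prodComm_apply, Prod.swap_prod_mk, Matrix.blockDiagonal_apply]
  by_cases h : q' = q
  · subst h; simp
  · rw [if_neg h, if_neg (fun hh => h hh.symm)]

lemma charpoly_indMat_mem {g : Γ} (hg : g ∈ Γ₀) :
    (indMat Γ₀ F n ρ g).charpoly
      = ∏ q : Γ ⧸ Γ₀, ((ρ (cocyc Γ₀ g q) : Matrix (Fin n) (Fin n) F)).charpoly := by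
  rw [indMat_mem_eq_blockDiagonal Γ₀ F n ρ hg, Matrix.charpoly_reindex,
    charpoly_blockDiagonal]

end Induced

/-- If `Γ₀` is a finite-index normal subgroup of `Γ` and `γ ∈ Γ` is virtually unipotent,
then a generator `γ₀` of `⟨γ⟩ ∩ Γ₀` is virtually unipotent as an element of `Γ₀`. -/
theorem virtually_unipotent_generator_in_finite_index_normal_subgroup
    {Γ : Type*} [Group Γ] (Γ₀ : Subgroup Γ) [Γ₀.Normal] (hfi : Γ₀.index ≠ 0)
    (γ : Γ) (hγ : IsVirtuallyUnipotent γ)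
    (γ₀ : Γ) (hmem : γ₀ ∈ Γ₀)
    (hgen : Subgroup.zpowers γ₀ = Subgroup.zpowers γ ⊓ Γ₀) :
    IsVirtuallyUnipotent (⟨γ₀, hmem⟩ : Γ₀) := by
  intro F _ n ρ μ hroot
  classical
  have hfinite : Finite (Γ ⧸ Γ₀) := (Nat.card_ne_zero.mp hfi).2
  have : Fintype (Γ ⧸ Γ₀) := Fintype.ofFinite _
  -- γ₀ is a power of γ
  have hγ₀γ : γ₀ ∈ Subgroup.zpowers γ := by
    have h := Subgroup.mem_zpowers γ₀
    rw [hgen] at h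
    exact h.1
  obtain ⟨k, hk⟩ := Subgroup.mem_zpowers_iff.mp hγ₀γ
  by_cases hk0 : k = 0
  · -- then γ₀ = 1 and every eigenvalue is 1
    have hone' : γ₀ = 1 := by rw [← hk, hk0, zpow_zero]
    have hγ₀1 : (⟨γ₀, hmem⟩ : Γ₀) = 1 := Subtype.ext hone'
    rw [hγ₀1, _root_.map_one] at hroot
    have hone : ((1 : GL (Fin n) F) : Matrix (Fin n) (Fin n) F).map
        (algebraMap F (AlgebraicClosure F))
        = (1 : Matrix (Fin n) (Fin n) (AlgebraicClosure F)) := by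
      rw [Units.val_one, Matrix.map_one _ (map_zero _) (map_one _)]
    rw [hone] at hroot
    have hμ : μ ∈ spectrum (AlgebraicClosure F)
        (1 : Matrix (Fin n) (Fin n) (AlgebraicClosure F)) :=
      (mem_spectrum_iff_isRoot_charpoly _ μ).mpr hroot
    rw [spectrum.mem_iff] at hμ
    refine ⟨1, one_pos, ?_⟩
    rw [pow_one]
    by_contra hμ1
    apply hμ
    have h1 : algebraMap (AlgebraicClosure F) (Matrix (Fin n) (Fin n) (AlgebraicClosure F)) μ - 1
        = algebraMap (AlgebraicClosure F) (Matrix (Fin n) (Fin n) (AlgebraicClosure F)) (μ - 1) := by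
      rw [_root_.map_sub, _root_.map_one]
    rw [h1]
    exact (isUnit_iff_ne_zero.mpr (sub_ne_zero.mpr hμ1)).map
      (algebraMap (AlgebraicClosure F) (Matrix (Fin n) (Fin n) (AlgebraicClosure F)))
  · -- the induced representation
    set m := Fintype.card ((Γ ⧸ Γ₀) × Fin n) with hm
    set e := Fintype.equivFin ((Γ ⧸ Γ₀) × Fin n) with he
    set σ' : Γ →* GL (Fin m) F :=
      (Units.map (Matrix.reindexAlgEquiv F F e).toRingEquiv.toMulEquiv.toMonoidHom).comp
        (indRep Γ₀ F n ρ) with hσ'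
    have hval : ∀ g : Γ, ((σ' g : Matrix (Fin m) (Fin m) F))
        = Matrix.reindex e e (indMat Γ₀ F n ρ g) := fun g => rfl
    -- μ is a root of the charpoly of the induced representation at γ₀
    have hroot2 : (((σ' γ₀ : Matrix (Fin m) (Fin m) F)).map
        (algebraMap F (AlgebraicClosure F))).charpoly.IsRoot μ := by
      rw [hval γ₀, Matrix.charpoly_map, Matrix.charpoly_reindex,
        charpoly_indMat_mem Γ₀ F n ρ hmem, Polynomial.map_prod, Polynomial.IsRoot,
        Polynomial.eval_prod]
      apply Finset.prod_eq_zero (Finset.mem_univ (1 : Γ ⧸ Γ₀))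
      rw [cocyc_self Γ₀ hmem, ← Matrix.charpoly_map]
      exact hroot
    -- pass to eigenvalues of σ' γ over the algebraic closure
    set u : GL (Fin m) (AlgebraicClosure F) :=
      Units.map (RingHom.mapMatrix (algebraMap F (AlgebraicClosure F))).toMonoidHom (σ' γ)
      with hu
    have huval : ((u : Matrix (Fin m) (Fin m) (AlgebraicClosure F)))
        = ((σ' γ : Matrix (Fin m) (Fin m) F)).map (algebraMap F (AlgebraicClosure F)) := rfl
    have huk : (((u ^ k : GL (Fin m) (AlgebraicClosure F)))
          : Matrix (Fin m) (Fin m) (AlgebraicClosure F))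
        = ((σ' γ₀ : Matrix (Fin m) (Fin m) F)).map (algebraMap F (AlgebraicClosure F)) := by
      rw [← hk, hu, ← _root_.map_zpow, ← _root_.map_zpow]
      rfl
    have hμspec : μ ∈ spectrum (AlgebraicClosure F)
        (((u ^ k : GL (Fin m) (AlgebraicClosure F)))
          : Matrix (Fin m) (Fin m) (AlgebraicClosure F)) := by
      rw [huk]
      exact (mem_spectrum_iff_isRoot_charpoly _ μ).mpr hroot2
    set j := k.natAbs with hj'
    have hj : 0 < j := Int.natAbs_pos.mpr hk0
    set v : GL (Fin m) (AlgebraicClosure F) := if 0 ≤ k then u else u⁻¹ with hv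
    have hvj : (u ^ k : GL (Fin m) (AlgebraicClosure F)) = v ^ j := by
      by_cases h0 : 0 ≤ k
      · rw [hv, if_pos h0, ← zpow_natCast, Int.natAbs_of_nonneg h0]
      · push_neg at h0
        rw [hv, if_neg (not_le.mpr h0), inv_pow, ← zpow_natCast, ← _root_.zpow_neg,
          ← Int.abs_eq_natAbs, abs_of_neg h0, neg_neg]
    have hμspec2 : μ ∈ spectrum (AlgebraicClosure F)
        (((v : Matrix (Fin m) (Fin m) (AlgebraicClosure F))) ^ j) := by
      rw [← Units.val_pow_eq_pow_val, ← hvj]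
      exact hμspec
    rw [spectrum.map_pow_of_pos _ hj] at hμspec2
    obtain ⟨lam, hlam, hlamj⟩ := hμspec2
    have hexist : ∃ mm : ℕ, 0 < mm ∧ lam ^ mm = 1 := by
      by_cases h0 : 0 ≤ k
      · rw [hv, if_pos h0] at hlam
        rw [huval] at hlam
        exact hγ F _ m σ' lam ((mem_spectrum_iff_isRoot_charpoly _ lam).mp hlam)
      · rw [hv, if_neg h0] at hlam
        have hne : lam ≠ 0 := by
          rintro rfl
          exact Units.zero_notMem_spectrum (AlgebraicClosure F) u⁻¹ hlam
        have hr : ((Units.mk0 lam hne : (AlgebraicClosure F)ˣ) : AlgebraicClosure F)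
            ∈ spectrum (AlgebraicClosure F)
              ((u⁻¹ : GL (Fin m) (AlgebraicClosure F))
                : Matrix (Fin m) (Fin m) (AlgebraicClosure F)) := hlam
        have h2 := (spectrum.inv_mem_iff (r := Units.mk0 lam hne) (a := u⁻¹)).mp hr
        rw [inv_inv] at h2
        have h3 : lam⁻¹ ∈ spectrum (AlgebraicClosure F)
            ((u : Matrix (Fin m) (Fin m) (AlgebraicClosure F))) := by
          simpa using h2
        rw [huval] at h3
        obtain ⟨mm, hmm, hmm1⟩ :=
          hγ F _ m σ' lam⁻¹ ((mem_spectrum_iff_isRoot_charpoly _ _).mp h3)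
        refine ⟨mm, hmm, ?_⟩
        have hinv : (lam ^ mm)⁻¹ = 1 := by rw [← inv_pow, hmm1]
        rwa [inv_eq_one] at hinv
    obtain ⟨mm, hmm, h1⟩ := hexist
    refine ⟨mm, hmm, ?_⟩
    rw [← hlamj, ← pow_mul, mul_comm, pow_mul, h1, one_pow]
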